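/- Fix an integer n ≥ 3, reals l ≤ x1 ≤ μ < x2, and a bid b with x1 < b < x2. Define π(x1) = (x2−μ)/(x2−x1) and λ(x1) = π(x1)^{n−1}·(b−x1). Then the derivative of λ with respect to x1 vanishes exactly at x̂1 = ((n−1)b − x2)/(n−2), λ is increasing in x1 for x1 < x̂1 and decreasing for x1 > x̂1; in particular x̂1 < b. -/

import Mathlib

/-- For n ≥ 3, the loss λ(x1) = ((x2−μ)/(x2−x1))^(n−1)·(b−x1) of bidding b against a two-point
distribution with mean μ has derivative vanishing exactly at x̂1 = ((n−1)b − x2)/(n−2); it is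
strictly increasing below x̂1 and strictly decreasing above it (up to b), and x̂1 < b. -/
theorem stmt_7 (n : ℕ) (hn : 3 ≤ n) (l μ x2 b : ℝ)
    (hlμ : l ≤ μ) (hμx2 : μ < x2) (hlb : l < b) (hbx2 : b < x2) :
    let lam : ℝ → ℝ := fun x => ((x2 - μ) / (x2 - x)) ^ (n - 1) * (b - x)
    let xhat : ℝ := (((n : ℝ) - 1) * b - x2) / ((n : ℝ) - 2)
    xhat < b ∧
    (∀ x < b, (deriv lam x = 0 ↔ x = xhat)) ∧
    StrictMonoOn lam (Set.Iic xhat) ∧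
    StrictAntiOn lam (Set.Icc xhat b) := by
  obtain ⟨j, rfl⟩ : ∃ j, n = j + 3 := ⟨n - 3, by omega⟩
  intro lam xhat
  have hlam : lam = fun x => (x2 - μ) ^ (j + 2) * ((b - x) / (x2 - x) ^ (j + 2)) := by
    funext x
    show ((x2 - μ) / (x2 - x)) ^ (j + 3 - 1) * (b - x) = _
    have : j + 3 - 1 = j + 2 := by omega
    rw [this, div_pow]
    ring
  have hxhat : xhat = (((j : ℝ) + 2) * b - x2) / ((j : ℝ) + 1) := by
    show (((((j + 3 : ℕ)) : ℝ) - 1) * b - x2) / (((j + 3 : ℕ) : ℝ) - 2) = _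
    push_cast
    ring_nf
  have hj1 : (0 : ℝ) < (j : ℝ) + 1 := by positivity
  have hxb : xhat < b := by
    rw [hxhat, div_lt_iff₀ hj1]; linarith
  -- key derivative
  have key : ∀ x : ℝ, x < x2 → HasDerivAt lam
      ((x2 - μ) ^ (j + 2) * (((j : ℝ) + 2) * (b - x) - (x2 - x)) / (x2 - x) ^ (j + 3)) x := by
    intro x hx
    have hne : x2 - x ≠ 0 := ne_of_gt (by linarith)
    have hu : HasDerivAt (fun x : ℝ => b - x) (-1) x := by
      simpa using (hasDerivAt_id x).const_sub b
    have h1 : HasDerivAt (fun x : ℝ => x2 - x) (-1) x := by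
      simpa using (hasDerivAt_id x).const_sub x2
    have hv := h1.pow (j + 2)
    rw [show j + 2 - 1 = j + 1 from rfl] at hv
    have hdiv := hu.div hv (pow_ne_zero _ hne)
    have hmul := hdiv.const_mul ((x2 - μ) ^ (j + 2))
    rw [hlam]
    refine hmul.congr_deriv ?_
    simp only [Pi.pow_apply]
    push_cast
    field_simp
    ring
  have hderiv : ∀ x : ℝ, x < x2 → deriv lam x
      = (x2 - μ) ^ (j + 2) * (((j : ℝ) + 2) * (b - x) - (x2 - x)) / (x2 - x) ^ (j + 3) :=
    fun x hx => (key x hx).deriv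
  have hP : (0 : ℝ) < (x2 - μ) ^ (j + 2) := pow_pos (by linarith) _
  have hSiff : ∀ x : ℝ, (x = xhat ↔ ((j : ℝ) + 2) * (b - x) - (x2 - x) = 0) := by
    intro x
    rw [hxhat, eq_div_iff (ne_of_gt hj1)]
    constructor <;> intro h <;> linarith
  refine ⟨hxb, ?_, ?_, ?_⟩
  · intro x hx
    have hx2 : x < x2 := lt_trans hx hbx2
    have hQ : (0 : ℝ) < (x2 - x) ^ (j + 3) := pow_pos (by linarith) _
    rw [hderiv x hx2, div_eq_zero_iff, mul_eq_zero]
    constructor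
    · rintro (h | h)
      · rcases h with h | h
        · exact absurd h (ne_of_gt hP)
        · exact (hSiff x).mpr h
      · exact absurd h (ne_of_gt hQ)
    · intro h
      exact Or.inl (Or.inr ((hSiff x).mp h))
  · apply strictMonoOn_of_deriv_pos (convex_Iic xhat)
    · intro x hx
      have hx2 : x < x2 := by
        have : x ≤ xhat := hx
        linarith
      exact (key x hx2).continuousAt.continuousWithinAt
    · intro x hx
      rw [interior_Iic] at hx
      have hxh : x < xhat := hx
      have hx2 : x < x2 := by linarith
      have hS : 0 < ((j : ℝ) + 2) * (b - x) - (x2 - x) := by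
        have := (lt_div_iff₀ hj1).mp (hxhat ▸ hxh)
        linarith
      rw [hderiv x hx2]
      exact div_pos (mul_pos hP hS) (pow_pos (by linarith) _)
  · apply strictAntiOn_of_deriv_neg (convex_Icc xhat b)
    · intro x hx
      have hx2 : x < x2 := lt_of_le_of_lt hx.2 hbx2
      exact (key x hx2).continuousAt.continuousWithinAt
    · intro x hx
      rw [interior_Icc] at hx
      have hx2 : x < x2 := lt_trans hx.2 hbx2
      have hS : ((j : ℝ) + 2) * (b - x) - (x2 - x) < 0 := by
        have := (div_lt_iff₀ hj1).mp (hxhat ▸ hx.1)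
        linarith
      rw [hderiv x hx2]
      exact div_neg_of_neg_of_pos (mul_neg_of_pos_of_neg hP hS) (pow_pos (by linarith) _)
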